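/- Let κ be an infinite cardinal and X an infinite set. Let Σ be the signature whose 0-ary symbols are constants c_α for α < κ and with no symbols of arity ≥ 1, so that Fm_Σ(X) = {c_α : α < κ} ∪ X. Define C : ℘(Fm_Σ(X)) → ℘(Fm_Σ(X)) by C(Γ) = Γ ∪ {c_γ : γ is a limit ordinal, 0 < γ < κ, and c_{α+1} ∈ Γ for all α < γ}. Then C is an inflationary, monotone, idempotent, structural operator (so its associated consequence relation Γ ⊢ φ :⟺ φ ∈ C(Γ) is a logic), and this logic has cardinality exactly κ. -/

import Mathlib

universe u

/-- Formulas over the signature whose only symbols are constants `c_α` for `α < κ`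
(no symbols of arity ≥ 1), with variables from `X`: `Fm_Σ(X) = {c_α : α < κ} ⊕ X`. -/
def Fm1 (κ : Cardinal.{u}) (X : Type u) : Type (u + 1) :=
  {o : Ordinal.{u} // o < κ.ord} ⊕ X

/-- The substitution (Σ-endomorphism of the formula algebra) induced by `σ : X → Fm`:
it fixes the constants and sends the variable `x` to `σ x`. -/
def subst1 (κ : Cardinal.{u}) (X : Type u) (σ : X → Fm1 κ X) : Fm1 κ X → Fm1 κ X :=
  Sum.elim Sum.inl σ

/-- The operator `C(Γ) = Γ ∪ {c_γ : γ limit, 0 < γ < κ, and c_{α+1} ∈ Γ for all α < γ}`. -/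
def C1 (κ : Cardinal.{u}) (X : Type u) (Γ : Set (Fm1 κ X)) : Set (Fm1 κ X) :=
  Γ ∪ {f | ∃ (γ : Ordinal.{u}) (hγ : γ < κ.ord),
        f = Sum.inl ⟨γ, hγ⟩ ∧ Order.IsSuccLimit γ ∧ 0 < γ ∧
        ∀ α < γ, ∃ h : α + 1 < κ.ord, Sum.inl ⟨α + 1, h⟩ ∈ Γ}

/-- A relation between subsets and elements of `A` is `μ`-ary. -/
def KAry1 {A : Type (u + 1)} (μ : Cardinal.{u + 1}) (r : Set A → A → Prop) : Prop :=
  ∀ (Γ : Set A) (φ : A), r Γ φ → ∃ Γ' ⊆ Γ, Cardinal.mk ↥Γ' < μ ∧ r Γ' φ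

/-- The map sending `α < γ` to the constant `c_{α+1}`. -/
def sMap (κ : Cardinal.{u}) (X : Type u) (γ : Ordinal.{u}) (hγ : γ < κ.ord)
    (hl : Order.IsSuccLimit γ) : Set.Iio γ → Fm1 κ X :=
  fun α => Sum.inl ⟨α.1 + 1, lt_trans (by
      rw [Ordinal.add_one_eq_succ]; exact hl.succ_lt α.2) hγ⟩

lemma sMap_inj (κ : Cardinal.{u}) (X : Type u) (γ : Ordinal.{u}) (hγ : γ < κ.ord)
    (hl : Order.IsSuccLimit γ) : Function.Injective (sMap κ X γ hγ hl) := by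
  intro a b hab
  simp only [sMap] at hab
  injection hab with h
  refine Subtype.ext (Order.succ_injective ?_)
  rw [← Ordinal.add_one_eq_succ, ← Ordinal.add_one_eq_succ]
  exact congrArg Subtype.val h

lemma mk_range_sMap (κ : Cardinal.{u}) (X : Type u) (γ : Ordinal.{u}) (hγ : γ < κ.ord)
    (hl : Order.IsSuccLimit γ) :
    Cardinal.mk ↥(Set.range (sMap κ X γ hγ hl)) = Cardinal.lift.{u + 1} γ.card := by
  rw [Cardinal.mk_range_eq _ (sMap_inj κ X γ hγ hl)]
  exact Ordinal.mk_Iio_ordinal γ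

/-- Membership of `c_γ` in `C1 κ X (range (sMap ...))`. -/
lemma cγ_mem (κ : Cardinal.{u}) (X : Type u) (γ : Ordinal.{u}) (hγ : γ < κ.ord)
    (hl : Order.IsSuccLimit γ) (hpos : 0 < γ) (Γ : Set (Fm1 κ X))
    (hsub : Set.range (sMap κ X γ hγ hl) ⊆ Γ) :
    (Sum.inl ⟨γ, hγ⟩ : Fm1 κ X) ∈ C1 κ X Γ := by
  right
  refine ⟨γ, hγ, rfl, hl, hpos, fun α hα => ?_⟩
  have h1 : α + 1 < κ.ord := lt_trans (by
    rw [Ordinal.add_one_eq_succ]; exact hl.succ_lt hα) hγ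
  exact ⟨h1, hsub ⟨⟨α, hα⟩, rfl⟩⟩

theorem stmt_1 (κ : Cardinal.{u}) (hκ : Cardinal.aleph0 ≤ κ)
    (X : Type u) (hX : Infinite X) :
    -- inflationary
    (∀ Γ, Γ ⊆ C1 κ X Γ) ∧
    -- monotone
    (∀ Γ Δ, Γ ⊆ Δ → C1 κ X Γ ⊆ C1 κ X Δ) ∧
    -- idempotent
    (∀ Γ, C1 κ X (C1 κ X Γ) = C1 κ X Γ) ∧
    -- structural
    (∀ (σ : X → Fm1 κ X) (Γ : Set (Fm1 κ X)) (φ : Fm1 κ X),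
        φ ∈ C1 κ X Γ → subst1 κ X σ φ ∈ C1 κ X (subst1 κ X σ '' Γ)) ∧
    -- the associated logic is κ-ary
    KAry1 (Cardinal.lift.{u + 1} κ) (fun Γ φ => φ ∈ C1 κ X Γ) ∧
    -- and κ is the least infinite cardinal for which it is κ-ary: cardinality exactly κ
    (∀ μ : Cardinal.{u + 1}, Cardinal.aleph0 ≤ μ →
        KAry1 μ (fun Γ φ => φ ∈ C1 κ X Γ) → Cardinal.lift.{u + 1} κ ≤ μ) := by
  refine ⟨fun Γ => Set.subset_union_left, ?_, ?_, ?_, ?_, ?_⟩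
  · -- monotone
    intro Γ Δ hΓΔ f hf
    rcases hf with hf | ⟨γ, hγ, hfe, hl, hpos, hall⟩
    · exact Or.inl (hΓΔ hf)
    · exact Or.inr ⟨γ, hγ, hfe, hl, hpos, fun α hα =>
        (hall α hα).imp fun h hmem => hΓΔ hmem⟩
  · -- idempotent
    intro Γ
    apply Set.Subset.antisymm _ Set.subset_union_left
    intro f hf
    rcases hf with hf | ⟨γ, hγ, hfe, hl, hpos, hall⟩
    · exact hf
    · refine Or.inr ⟨γ, hγ, hfe, hl, hpos, fun α hα => ?_⟩
      obtain ⟨h, hmem⟩ := hall α hα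
      refine ⟨h, ?_⟩
      rcases hmem with hmem | ⟨γ', hγ', hfe', hl', _, _⟩
      · exact hmem
      · exfalso
        have heq : α + 1 = γ' := by
          injection hfe' with h'
          exact congrArg Subtype.val h'
        have hlt : α < γ' := by
          rw [← heq, Ordinal.add_one_eq_succ]; exact Order.lt_succ α
        have h2 : α + 1 < γ' := by
          rw [Ordinal.add_one_eq_succ]; exact hl'.succ_lt hlt
        rw [heq] at h2
        exact lt_irrefl _ h2
  · -- structural
    intro σ Γ φ hφ
    rcases hφ with hφ | ⟨γ, hγ, hfe, hl, hpos, hall⟩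
    · exact Or.inl ⟨φ, hφ, rfl⟩
    · subst hfe
      refine Or.inr ⟨γ, hγ, rfl, hl, hpos, fun α hα => ?_⟩
      obtain ⟨h, hmem⟩ := hall α hα
      exact ⟨h, ⟨_, hmem, rfl⟩⟩
  · -- κ-ary
    intro Γ φ hφ
    rcases hφ with hφ | ⟨γ, hγ, hfe, hl, hpos, hall⟩
    · refine ⟨{φ}, by simpa using hφ, ?_, Or.inl rfl⟩
      rw [Cardinal.mk_singleton]
      exact lt_of_lt_of_le Cardinal.one_lt_aleph0 (by
        rw [← Cardinal.lift_aleph0.{u+1, u}]; exact Cardinal.lift_le.mpr hκ)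
    · refine ⟨Set.range (sMap κ X γ hγ hl), ?_, ?_, ?_⟩
      · rintro _ ⟨⟨α, hα⟩, rfl⟩
        obtain ⟨h, hmem⟩ := hall α hα
        exact hmem
      · rw [mk_range_sMap]
        exact Cardinal.lift_lt.mpr (Cardinal.lt_ord.mp hγ)
      · rw [hfe]
        exact cγ_mem κ X γ hγ hl hpos _ le_rfl
  · -- minimality
    intro μ hμ hk
    by_contra hlt
    push_neg at hlt
    obtain ⟨ν, rfl⟩ := Cardinal.mem_range_lift_of_le hlt.le
    have hνκ : ν < κ := Cardinal.lift_lt.mp hlt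
    have hνinf : Cardinal.aleph0 ≤ ν := by
      rwa [← Cardinal.lift_aleph0.{u+1, u}, Cardinal.lift_le] at hμ
    set γ := ν.ord with hγdef
    have hl : Order.IsSuccLimit γ := Cardinal.isSuccLimit_ord hνinf
    have hγ : γ < κ.ord := Cardinal.ord_lt_ord.mpr hνκ
    have hpos : 0 < γ := hl.pos
    obtain ⟨Γ', hΓ'sub, hΓ'card, hmem⟩ :=
      hk (Set.range (sMap κ X γ hγ hl)) (Sum.inl ⟨γ, hγ⟩)
        (cγ_mem κ X γ hγ hl hpos _ le_rfl)
    -- c_γ is not in Γ' (all elements of Γ' are successor constants)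
    have hnotmem : (Sum.inl ⟨γ, hγ⟩ : Fm1 κ X) ∉ Γ' := by
      intro h
      obtain ⟨⟨α, hα⟩, heq⟩ := hΓ'sub h
      have heq2 : α + 1 = γ := by
        injection heq with h'
        exact congrArg Subtype.val h'
      have hlt : α < γ := by
        rw [← heq2, Ordinal.add_one_eq_succ]; exact Order.lt_succ α
      have h2 : α + 1 < γ := by
        rw [Ordinal.add_one_eq_succ]; exact hl.succ_lt hlt
      rw [heq2] at h2
      exact lt_irrefl _ h2
    rcases hmem with hmem | ⟨γ', hγ', hfe', hl', _, hall⟩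
    · exact hnotmem hmem
    · have hγγ' : γ = γ' := by
        injection hfe' with h'
        exact congrArg Subtype.val h'
      subst hγγ'
      -- then Γ ⊆ Γ', so mk Γ' ≥ lift ν = μ, contradiction
      have hsub2 : Set.range (sMap κ X γ hγ hl) ⊆ Γ' := by
        rintro _ ⟨⟨α, hα⟩, rfl⟩
        obtain ⟨h, hm⟩ := hall α hα
        exact hm
      have hle : Cardinal.lift.{u + 1} ν ≤ Cardinal.mk ↥Γ' := by
        have := Cardinal.mk_le_mk_of_subset hsub2
        rwa [mk_range_sMap, hγdef, Cardinal.card_ord] at this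
      exact absurd hΓ'card (not_lt.mpr hle)
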